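/- Let Δ < −4 be the discriminant of an imaginary quadratic order and H_Δ ∈ ℤ[X] the associated Hilbert class polynomial, assumed irreducible of degree h ≥ 1 over ℚ, with roots the j-invariants j(τ₁), …, j(τ_h) where τ₁ ∈ F has Im(τ₁) ≥ √|Δ|/2 and Im(τ_i) ≤ √|Δ|/4 for i ≥ 2 (F the standard fundamental domain). Assume the bounds ||j(τ)| − e^{2π Im(τ)}| ≤ 2079 for τ ∈ F and h ≤ (√|Δ|/π)(log|Δ| + 2). Then if e^{π√|Δ|} − 2079 > h·(e^{π√|Δ|/2} + 2079), the module of additive relations of H_Δ is trivial, i.e., the only α : Z_{H_Δ} → ℤ with ∑_x α(x)·x = 0 is zero. -/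

import Mathlib

open Polynomial in
/-- under the stated analytic bounds on the j-invariants (the
roots of the Hilbert class polynomial H_Δ), if
e^{π√|Δ|} − 2079 > h·(e^{π√|Δ|/2} + 2079) then the module of additive
relations of H_Δ is trivial. -/
theorem stmt_15 (Δ : ℤ) (hΔ : Δ < -4)
    (P : Polynomial ℤ) (hmonic : P.Monic)
    (hirr : Irreducible (P.map (Int.castRingHom ℚ)))
    (h : ℕ) (hh1 : 1 ≤ h) (hdeg : P.natDegree = h)
    (r : Fin h → ℂ) (hroots : ∀ i, Polynomial.aeval (r i) P = 0)
    (hinj : Function.Injective r)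
    (t : Fin h → ℝ)
    (ht1 : Real.sqrt |(Δ : ℝ)| / 2 ≤ t ⟨0, hh1⟩)
    (hti : ∀ i : Fin h, i ≠ ⟨0, hh1⟩ → t i ≤ Real.sqrt |(Δ : ℝ)| / 4)
    (hbound : ∀ i, |‖r i‖ - Real.exp (2 * Real.pi * t i)| ≤ 2079)
    (hclass : (h : ℝ) ≤ Real.sqrt |(Δ : ℝ)| / Real.pi * (Real.log |(Δ : ℝ)| + 2))
    (hmain : (h : ℝ) * (Real.exp (Real.pi * Real.sqrt |(Δ : ℝ)| / 2) + 2079)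
      < Real.exp (Real.pi * Real.sqrt |(Δ : ℝ)|) - 2079) :
    ∀ α : Fin h → ℤ, (∑ i : Fin h, (α i : ℂ) * r i = 0) → α = 0 := by
  intro α hrel
  by_contra hα
  classical
  set i0 : Fin h := ⟨0, hh1⟩ with hi0
  set Q : ℚ[X] := P.map (Int.castRingHom ℚ) with hQ
  have hQmonic : Q.Monic := hmonic.map _
  have hQ0 : Q ≠ 0 := hQmonic.ne_zero
  have hQdeg : Q.natDegree = h := by
    rw [hQ, hmonic.natDegree_map, hdeg]
  have hQroot : ∀ i, Polynomial.aeval (r i) Q = 0 := by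
    intro i
    rw [hQ]
    have h' : (Int.castRingHom ℚ) = algebraMap ℤ ℚ := rfl
    rw [h', Polynomial.aeval_map_algebraMap]
    exact hroots i
  set K := Q.SplittingField with hK
  have hsplits : (Q.map (algebraMap ℚ K)).Splits := SplittingField.splits Q
  let e : K →ₐ[ℚ] ℂ := IsAlgClosed.lift
  have einj : Function.Injective e := e.toRingHom.injective
  have hmapmap : Q.map (algebraMap ℚ ℂ) = (Q.map (algebraMap ℚ K)).map e.toRingHom := by
    rw [Polynomial.map_map (algebraMap ℚ K) e.toRingHom Q]
    congr 1
    exact e.comp_algebraMap.symm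
  have harootseq : Q.aroots ℂ = (Q.aroots K).map e := by
    rw [Polynomial.aroots, Polynomial.aroots, hmapmap,
      hsplits.roots_map _]
    rfl
  have hrmem : ∀ i, r i ∈ Q.aroots ℂ := by
    intro i
    rw [Polynomial.mem_aroots]
    exact ⟨hQ0, hQroot i⟩
  have hs : ∀ i, ∃ x ∈ Q.aroots K, e x = r i := by
    intro i
    have h' := hrmem i
    rw [harootseq, Multiset.mem_map] at h'
    exact h'
  choose s hsmem hse using hs
  have hsroot : ∀ i, Polynomial.aeval (s i) Q = 0 :=
    fun i => (Polynomial.mem_aroots.mp (hsmem i)).2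
  have hsinj : Function.Injective s := by
    intro a b hab
    apply hinj
    rw [← hse a, ← hse b, hab]
  have hallroots : ∀ x ∈ Q.aroots K, ∃ i, s i = x := by
    intro x hx
    have hcard : (Q.aroots K).toFinset.card ≤ h := by
      calc (Q.aroots K).toFinset.card ≤ Multiset.card (Q.aroots K) :=
            Multiset.toFinset_card_le _
        _ ≤ (Q.map (algebraMap ℚ K)).natDegree := Polynomial.card_roots' _
        _ = h := by rw [hQmonic.natDegree_map, hQdeg]
    have hsub : Finset.image s Finset.univ ⊆ (Q.aroots K).toFinset := by
      intro y hy
      obtain ⟨i, _, rfl⟩ := Finset.mem_image.mp hy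
      exact Multiset.mem_toFinset.mpr (hsmem i)
    have hcard2 : (Finset.image s Finset.univ).card = h := by
      rw [Finset.card_image_of_injective _ hsinj, Finset.card_univ, Fintype.card_fin]
    have heq : Finset.image s Finset.univ = (Q.aroots K).toFinset :=
      Finset.eq_of_subset_of_card_le hsub (by omega)
    have hx' : x ∈ Finset.image s Finset.univ := heq ▸ Multiset.mem_toFinset.mpr hx
    obtain ⟨i, _, hi⟩ := Finset.mem_image.mp hx'
    exact ⟨i, hi⟩
  have hrelK : ∑ i : Fin h, (α i : K) * s i = 0 := by
    apply einj
    rw [map_sum, map_zero, ← hrel]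
    refine Finset.sum_congr rfl fun i _ => ?_
    rw [map_mul, map_intCast, hse]
  obtain ⟨i, -, hmax⟩ := Finset.exists_max_image Finset.univ (fun j => |α j|)
    ⟨i0, Finset.mem_univ _⟩
  have hαi : 1 ≤ |α i| := by
    obtain ⟨j, hj⟩ := Function.ne_iff.mp hα
    have h1 := hmax j (Finset.mem_univ j)
    have h2 : 1 ≤ |α j| := by
      have := abs_pos.mpr hj
      omega
    omega
  have hmp : minpoly ℚ (s i0) = minpoly ℚ (s i) :=
    (minpoly.eq_of_irreducible hirr (hsroot i0)).symm.trans
      (minpoly.eq_of_irreducible hirr (hsroot i))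
  haveI : Normal ℚ K := Polynomial.SplittingField.instNormal Q
  obtain ⟨σ, hσ'⟩ := (Normal.minpoly_eq_iff_mem_orbit K).mp hmp
  have hσ : σ (s i) = s i0 := hσ'
  have hσroot : ∀ j, ∃ k, s k = σ (s j) := by
    intro j
    apply hallroots
    rw [Polynomial.mem_aroots]
    refine ⟨hQ0, ?_⟩
    simpa [hsroot j] using Polynomial.aeval_algHom_apply σ.toAlgHom (s j) Q
  choose π hπ using hσroot
  have hπinj : Function.Injective π := by
    intro a b hab
    apply hsinj
    apply σ.injective
    rw [← hπ a, ← hπ b, hab]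
  have hπbij : Function.Bijective π := Finite.injective_iff_bijective.mp hπinj
  let ρ : Equiv.Perm (Fin h) := Equiv.ofBijective π hπbij
  have hπi : π i = i0 := by
    apply hsinj
    rw [hπ i, hσ]
  have hrelK2 : ∑ j : Fin h, (α j : K) * s (π j) = 0 := by
    have h' := congrArg σ hrelK
    rw [map_sum, map_zero] at h'
    rw [← h']
    refine Finset.sum_congr rfl fun j _ => ?_
    rw [map_mul, map_intCast, hπ]
  have hrelC : ∑ j : Fin h, (α j : ℂ) * r (π j) = 0 := by
    have h' := congrArg e hrelK2
    rw [map_sum, map_zero] at h'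
    rw [← h']
    refine Finset.sum_congr rfl fun j _ => ?_
    rw [map_mul, map_intCast, hse]
  set β : Fin h → ℤ := fun k => α (ρ.symm k) with hβ
  have hrelβ : ∑ k : Fin h, (β k : ℂ) * r k = 0 := by
    rw [← hrelC]
    refine (Fintype.sum_equiv ρ _ _ fun j => ?_).symm
    simp only [hβ, Equiv.symm_apply_apply]
    rfl
  have hβ0 : β i0 = α i := by
    have h' : ρ.symm i0 = i := by
      apply ρ.injective
      simp only [Equiv.apply_symm_apply]
      exact hπi.symm
    show α (ρ.symm i0) = α i
    rw [h']
  have hβle : ∀ k, |β k| ≤ |α i| := fun k => hmax _ (Finset.mem_univ _)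
  -- dominant root estimate
  have key : ‖r i0‖ ≤ ∑ k ∈ Finset.univ.erase i0, ‖r k‖ := by
    have hsplit : (β i0 : ℂ) * r i0 = -∑ k ∈ Finset.univ.erase i0, (β k : ℂ) * r k := by
      rw [eq_neg_iff_add_eq_zero, add_comm,
        Finset.sum_erase_add _ _ (Finset.mem_univ i0)]
      exact hrelβ
    have h1 : (|α i| : ℝ) * ‖r i0‖ ≤
        (|α i| : ℝ) * ∑ k ∈ Finset.univ.erase i0, ‖r k‖ := by
      calc (|α i| : ℝ) * ‖r i0‖
          = ‖(β i0 : ℂ) * r i0‖ := by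
            rw [norm_mul, Complex.norm_intCast, hβ0, ← Int.cast_abs]
        _ = ‖∑ k ∈ Finset.univ.erase i0, (β k : ℂ) * r k‖ := by
            rw [hsplit, norm_neg]
        _ ≤ ∑ k ∈ Finset.univ.erase i0, ‖(β k : ℂ) * r k‖ :=
            norm_sum_le _ _
        _ ≤ ∑ k ∈ Finset.univ.erase i0, (|α i| : ℝ) * ‖r k‖ := by
            refine Finset.sum_le_sum fun k _ => ?_
            rw [norm_mul, Complex.norm_intCast, ← Int.cast_abs]
            exact mul_le_mul_of_nonneg_right (by exact_mod_cast hβle k)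
              (norm_nonneg _)
        _ = (|α i| : ℝ) * ∑ k ∈ Finset.univ.erase i0, ‖r k‖ := by
            rw [Finset.mul_sum]
    have hpos : (0 : ℝ) < (|α i| : ℝ) := by exact_mod_cast hαi
    exact le_of_mul_le_mul_left h1 hpos
  -- analytic bounds
  have hπpos := Real.pi_pos
  have hlb : Real.exp (Real.pi * Real.sqrt |(Δ : ℝ)|) - 2079 ≤ ‖r i0‖ := by
    have hb := abs_le.mp (hbound i0)
    have harg : Real.pi * Real.sqrt |(Δ : ℝ)| ≤ 2 * Real.pi * t i0 := by
      nlinarith [ht1]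
    have := Real.exp_le_exp.mpr harg
    linarith [hb.1]
  have hub : ∀ k ∈ Finset.univ.erase i0,
      ‖r k‖ ≤ Real.exp (Real.pi * Real.sqrt |(Δ : ℝ)| / 2) + 2079 := by
    intro k hk
    have hk' : k ≠ i0 := (Finset.mem_erase.mp hk).1
    have hb := abs_le.mp (hbound k)
    have harg : 2 * Real.pi * t k ≤ Real.pi * Real.sqrt |(Δ : ℝ)| / 2 := by
      nlinarith [hti k hk']
    have := Real.exp_le_exp.mpr harg
    linarith [hb.2]
  have hsum : ∑ k ∈ Finset.univ.erase i0, ‖r k‖ ≤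
      (h : ℝ) * (Real.exp (Real.pi * Real.sqrt |(Δ : ℝ)| / 2) + 2079) := by
    have hcard : (Finset.univ.erase i0).card = h - 1 := by
      rw [Finset.card_erase_of_mem (Finset.mem_univ i0), Finset.card_univ,
        Fintype.card_fin]
    have hE : (0 : ℝ) ≤ Real.exp (Real.pi * Real.sqrt |(Δ : ℝ)| / 2) + 2079 := by
      positivity
    calc ∑ k ∈ Finset.univ.erase i0, ‖r k‖
        ≤ ∑ _k ∈ Finset.univ.erase i0,
            (Real.exp (Real.pi * Real.sqrt |(Δ : ℝ)| / 2) + 2079) :=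
          Finset.sum_le_sum hub
      _ = ((h : ℝ) - 1) * (Real.exp (Real.pi * Real.sqrt |(Δ : ℝ)| / 2) + 2079) := by
          rw [Finset.sum_const, hcard, nsmul_eq_mul]
          have : ((h - 1 : ℕ) : ℝ) = (h : ℝ) - 1 := by
            push_cast [Nat.cast_sub hh1]
            ring
          rw [this]
      _ ≤ (h : ℝ) * (Real.exp (Real.pi * Real.sqrt |(Δ : ℝ)| / 2) + 2079) := by
          nlinarith
  linarith
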